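/- arXiv:2502.05059 — 3 statements merged into one kernel-verified Lean document; each statement's English description precedes it below -/
import Mathlib

section
/- Let (G_y, X) and (G_z, X) be terminal graphs with V(G_y) ∩ V(G_z) = X, and let G be their union (V(G) = V(G_y) ∪ V(G_z), E(G) = E(G_y) ∪ E(G_z)), so that (G, X) is a terminal graph. Let S_y ⊆ V(G_y) ∖ X have characteristic (α_y, β_y) in (G_y, X) and let S_z ⊆ V(G_z) ∖ X have characteristic (α_z, β_z) in (G_z, X). Then the characteristic (α, β) of S_y ∪ S_z in (G, X) satisfies, for every D ⊆ X: α(D) = α_y(D) + α_z(D), and β(D) = 1 if and only if β_y(D) = 1 and β_z(D) = 1. -/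
open Finset

variable {V : Type*}

/-- `M` is a vertex cover of `(G with vertex set A) − S`: `M ⊆ A \ S` and every
edge of `G` with both endpoints outside `S` has an endpoint in `M`. -/
def IsVCDel [DecidableEq V] (G : SimpleGraph V) (A S M : Finset V) : Prop :=
  M ⊆ A \ S ∧ ∀ ⦃u v : V⦄, G.Adj u v → u ∉ S → v ∉ S → u ∈ M ∨ v ∈ M

/-- `(G, A, X)` is a terminal graph: vertex set `A`, all edges of `G` inside
`A`, and `X ⊆ A` is an independent set of `G`. -/
def IsTerminalGraph [DecidableEq V] (G : SimpleGraph V) (A X : Finset V) : Prop :=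
  X ⊆ A ∧ (∀ ⦃u v : V⦄, G.Adj u v → u ∈ A ∧ v ∈ A) ∧
    ∀ u ∈ X, ∀ v ∈ X, ¬ G.Adj u v

/-- A vertex cover of type `D` of `(G with vertex set A, terminals X) − S`:
a vertex cover `M` of `G − S` with `M ∩ X = D`. -/
def IsTypedVC [DecidableEq V] (G : SimpleGraph V) (A X S D M : Finset V) : Prop :=
  IsVCDel G A S M ∧ M ∩ X = D

/-- `(α, β)` is the characteristic of `S` in the terminal graph `(G, A, X)`:
for each `D ⊆ X`, `α D` is the minimum reduced size `|M \ X|` of a vertex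
cover `M` of type `D` of `G − S`, and `β D = 1` iff there is exactly one vertex
cover of type `D` with reduced size `α D` (and `β D = 2` otherwise). -/
def IsCharacteristic [DecidableEq V] (G : SimpleGraph V) (A X S : Finset V)
    (α β : Finset V → ℕ) : Prop :=
  ∀ D ⊆ X,
    (∃ M, IsTypedVC G A X S D M ∧ (M \ X).card = α D) ∧
    (∀ M, IsTypedVC G A X S D M → α D ≤ (M \ X).card) ∧
    (β D = 1 ∨ β D = 2) ∧
    (β D = 1 ↔ ∃! M, IsTypedVC G A X S D M ∧ (M \ X).card = α D)

section Aux
variable [DecidableEq V]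

lemma typed_restrict
    {G1 G2 : SimpleGraph V} {A1 A2 X : Finset V}
    (hG1 : IsTerminalGraph G1 A1 X)
    (hInter : A1 ∩ A2 = X)
    {S1 S2 : Finset V} (hS2 : S2 ⊆ A2 \ X)
    {D M : Finset V}
    (hM : IsTypedVC (G1 ⊔ G2) (A1 ∪ A2) X (S1 ∪ S2) D M) :
    IsTypedVC G1 A1 X S1 D (M ∩ A1) := by
  obtain ⟨⟨hsub, hcov⟩, hX⟩ := hM
  refine ⟨⟨?_, ?_⟩, ?_⟩
  · intro w hw
    simp only [mem_inter] at hw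
    have := hsub hw.1
    simp only [mem_sdiff, mem_union, not_or] at this ⊢
    exact ⟨hw.2, this.2.1⟩
  · intro u v huv hu hv
    have huA := (hG1.2.1 huv).1
    have hvA := (hG1.2.1 huv).2
    have huS2 : u ∉ S2 := fun hh => by
      have h1 := hS2 hh
      simp only [mem_sdiff] at h1
      exact h1.2 (by rw [← hInter]; exact mem_inter.mpr ⟨huA, h1.1⟩)
    have hvS2 : v ∉ S2 := fun hh => by
      have h1 := hS2 hh
      simp only [mem_sdiff] at h1
      exact h1.2 (by rw [← hInter]; exact mem_inter.mpr ⟨hvA, h1.1⟩)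
    have := hcov ((SimpleGraph.sup_adj _ _ _ _).mpr (Or.inl huv))
      (by simp only [mem_union, not_or]; exact ⟨hu, huS2⟩)
      (by simp only [mem_union, not_or]; exact ⟨hv, hvS2⟩)
    rcases this with hh | hh
    · exact Or.inl (mem_inter.mpr ⟨hh, huA⟩)
    · exact Or.inr (mem_inter.mpr ⟨hh, hvA⟩)
  · rw [inter_assoc, inter_eq_right.mpr hG1.1, hX]

lemma typed_join
    {Gy Gz : SimpleGraph V} {Ay Az X : Finset V}
    (hInter : Ay ∩ Az = X)
    {Sy Sz : Finset V} (hSy : Sy ⊆ Ay \ X) (hSz : Sz ⊆ Az \ X)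
    {D My Mz : Finset V}
    (hMy : IsTypedVC Gy Ay X Sy D My) (hMz : IsTypedVC Gz Az X Sz D Mz) :
    IsTypedVC (Gy ⊔ Gz) (Ay ∪ Az) X (Sy ∪ Sz) D (My ∪ Mz) := by
  obtain ⟨⟨hysub, hycov⟩, hyX⟩ := hMy
  obtain ⟨⟨hzsub, hzcov⟩, hzX⟩ := hMz
  refine ⟨⟨?_, ?_⟩, ?_⟩
  · intro w hw
    simp only [mem_sdiff, mem_union, not_or]
    rcases mem_union.mp hw with hh | hh
    · have h1 := hysub hh
      simp only [mem_sdiff] at h1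
      refine ⟨Or.inl h1.1, h1.2, fun h2 => ?_⟩
      have h3 := hSz h2
      simp only [mem_sdiff] at h3
      exact h3.2 (by rw [← hInter]; exact mem_inter.mpr ⟨h1.1, h3.1⟩)
    · have h1 := hzsub hh
      simp only [mem_sdiff] at h1
      refine ⟨Or.inr h1.1, fun h2 => ?_, h1.2⟩
      have h3 := hSy h2
      simp only [mem_sdiff] at h3
      exact h3.2 (by rw [← hInter]; exact mem_inter.mpr ⟨h3.1, h1.1⟩)
  · intro u v huv hu hv
    simp only [mem_union, not_or] at hu hv
    rcases (SimpleGraph.sup_adj _ _ _ _).mp huv with hh | hh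
    · rcases hycov hh hu.1 hv.1 with h1 | h1
      · exact Or.inl (mem_union.mpr (Or.inl h1))
      · exact Or.inr (mem_union.mpr (Or.inl h1))
    · rcases hzcov hh hu.2 hv.2 with h1 | h1
      · exact Or.inl (mem_union.mpr (Or.inr h1))
      · exact Or.inr (mem_union.mpr (Or.inr h1))
  · rw [union_inter_distrib_right, hyX, hzX, union_self]

lemma card_sdiff_union_split
    {Ay Az X My Mz : Finset V} (hInter : Ay ∩ Az = X)
    (hMy : My ⊆ Ay) (hMz : Mz ⊆ Az) :
    ((My ∪ Mz) \ X).card = (My \ X).card + (Mz \ X).card := by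
  rw [union_sdiff_distrib]
  apply card_union_of_disjoint
  rw [disjoint_left]
  intro w h1 h2
  simp only [mem_sdiff] at h1 h2
  exact h1.2 (by rw [← hInter]; exact mem_inter.mpr ⟨hMy h1.1, hMz h2.1⟩)

lemma recover_left
    {Ay Az X D My Mz : Finset V} (hInter : Ay ∩ Az = X)
    (hMy : My ⊆ Ay) (hMyX : My ∩ X = D) (hMz : Mz ⊆ Az) (hMzX : Mz ∩ X = D) :
    (My ∪ Mz) ∩ Ay = My := by
  rw [union_inter_distrib_right, inter_eq_left.mpr hMy]
  apply union_eq_left.mpr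
  intro w hw
  simp only [mem_inter] at hw
  have hwX : w ∈ X := by rw [← hInter]; exact mem_inter.mpr ⟨hw.2, hMz hw.1⟩
  have hwD : w ∈ D := by rw [← hMzX]; exact mem_inter.mpr ⟨hw.1, hwX⟩
  rw [← hMyX] at hwD
  exact (mem_inter.mp hwD).1

end Aux

/-- Join of two terminal graphs sharing exactly the terminals `X`: the
characteristic of `S_y ∪ S_z` in the union is obtained componentwise. -/
theorem char_join_terminal [Fintype V] [DecidableEq V]
    (Gy Gz : SimpleGraph V) (Ay Az X : Finset V)
    (hGy : IsTerminalGraph Gy Ay X) (hGz : IsTerminalGraph Gz Az X)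
    (hInter : Ay ∩ Az = X)
    (Sy Sz : Finset V) (hSy : Sy ⊆ Ay \ X) (hSz : Sz ⊆ Az \ X)
    (αy βy αz βz α β : Finset V → ℕ)
    (hy : IsCharacteristic Gy Ay X Sy αy βy)
    (hz : IsCharacteristic Gz Az X Sz αz βz)
    (h : IsCharacteristic (Gy ⊔ Gz) (Ay ∪ Az) X (Sy ∪ Sz) α β) :
    ∀ D ⊆ X, α D = αy D + αz D ∧ (β D = 1 ↔ βy D = 1 ∧ βz D = 1) := by
  intro D hD
  obtain ⟨⟨My, hMy, hMyc⟩, hminy, hβy, hβy1⟩ := hy D hD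
  obtain ⟨⟨Mz, hMz, hMzc⟩, hminz, hβz, hβz1⟩ := hz D hD
  obtain ⟨⟨M, hM, hMc⟩, hmin, hβ, hβ1⟩ := h D hD
  have split : ∀ N, IsTypedVC (Gy ⊔ Gz) (Ay ∪ Az) X (Sy ∪ Sz) D N →
      IsTypedVC Gy Ay X Sy D (N ∩ Ay) ∧ IsTypedVC Gz Az X Sz D (N ∩ Az) ∧
      N = (N ∩ Ay) ∪ (N ∩ Az) ∧
      (N \ X).card = ((N ∩ Ay) \ X).card + ((N ∩ Az) \ X).card := by
    intro N hN
    have h1 := typed_restrict hGy hInter hSz hN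
    have hN' : IsTypedVC (Gz ⊔ Gy) (Az ∪ Ay) X (Sz ∪ Sy) D N := by
      rwa [sup_comm Gz Gy, union_comm Az Ay, union_comm Sz Sy]
    have h2 := typed_restrict hGz (by rw [inter_comm]; exact hInter) hSy hN'
    have hNsub : N ⊆ Ay ∪ Az := hN.1.1.trans sdiff_subset
    have heq : N = (N ∩ Ay) ∪ (N ∩ Az) := by
      rw [← inter_union_distrib_left, inter_eq_left.mpr hNsub]
    refine ⟨h1, h2, heq, ?_⟩
    conv_lhs => rw [heq]
    exact card_sdiff_union_split hInter inter_subset_right inter_subset_right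
  have hjoin := typed_join hInter hSy hSz hMy hMz
  have hjc : ((My ∪ Mz) \ X).card = αy D + αz D := by
    rw [card_sdiff_union_split hInter (hMy.1.1.trans sdiff_subset)
      (hMz.1.1.trans sdiff_subset), hMyc, hMzc]
  have hle : α D ≤ αy D + αz D := hjc ▸ hmin _ hjoin
  obtain ⟨h1, h2, heq, hcard⟩ := split M hM
  have hge : αy D + αz D ≤ α D := by
    have e1 := hminy _ h1
    have e2 := hminz _ h2
    omega
  have hα : α D = αy D + αz D := le_antisymm hle hge
  refine ⟨hα, ?_⟩
  constructor
  · intro hβ1eq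
    obtain ⟨M₀, hM₀, huniq⟩ := hβ1.mp hβ1eq
    constructor
    · refine hβy1.mpr ⟨My, ⟨hMy, hMyc⟩, ?_⟩
      rintro N ⟨hN, hNc⟩
      have hNjoin := typed_join hInter hSy hSz hN hMz
      have hNjc : ((N ∪ Mz) \ X).card = α D := by
        rw [card_sdiff_union_split hInter (hN.1.1.trans sdiff_subset)
          (hMz.1.1.trans sdiff_subset), hNc, hMzc, hα]
      have e1 : N ∪ Mz = M₀ := huniq _ ⟨hNjoin, hNjc⟩
      have e2 : My ∪ Mz = M₀ := huniq _ ⟨hjoin, by rw [hjc, hα]⟩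
      have e3 : (N ∪ Mz) ∩ Ay = (My ∪ Mz) ∩ Ay := by rw [e1, e2]
      rwa [recover_left hInter (hN.1.1.trans sdiff_subset) hN.2
            (hMz.1.1.trans sdiff_subset) hMz.2,
           recover_left hInter (hMy.1.1.trans sdiff_subset) hMy.2
            (hMz.1.1.trans sdiff_subset) hMz.2] at e3
    · refine hβz1.mpr ⟨Mz, ⟨hMz, hMzc⟩, ?_⟩
      rintro N ⟨hN, hNc⟩
      have hNjoin := typed_join hInter hSy hSz hMy hN
      have hNjc : ((My ∪ N) \ X).card = α D := by
        rw [card_sdiff_union_split hInter (hMy.1.1.trans sdiff_subset)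
          (hN.1.1.trans sdiff_subset), hMyc, hNc, hα]
      have e1 : My ∪ N = M₀ := huniq _ ⟨hNjoin, hNjc⟩
      have e2 : My ∪ Mz = M₀ := huniq _ ⟨hjoin, by rw [hjc, hα]⟩
      have e3 : (N ∪ My) ∩ Az = (Mz ∪ My) ∩ Az := by
        rw [union_comm N My, union_comm Mz My, e1, e2]
      rwa [recover_left (by rw [inter_comm]; exact hInter)
            (hN.1.1.trans sdiff_subset) hN.2 (hMy.1.1.trans sdiff_subset) hMy.2,
           recover_left (by rw [inter_comm]; exact hInter)
            (hMz.1.1.trans sdiff_subset) hMz.2 (hMy.1.1.trans sdiff_subset) hMy.2] at e3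
  · rintro ⟨hby, hbz⟩
    obtain ⟨My₀, hMy₀, huy⟩ := hβy1.mp hby
    obtain ⟨Mz₀, hMz₀, huz⟩ := hβz1.mp hbz
    refine hβ1.mpr ⟨My₀ ∪ Mz₀, ⟨typed_join hInter hSy hSz hMy₀.1 hMz₀.1, ?_⟩, ?_⟩
    · rw [card_sdiff_union_split hInter (hMy₀.1.1.1.trans sdiff_subset)
        (hMz₀.1.1.1.trans sdiff_subset), hMy₀.2, hMz₀.2, hα]
    · rintro N ⟨hN, hNc⟩
      obtain ⟨h1', h2', heq', hcard'⟩ := split N hN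
      have e1 := hminy _ h1'
      have e2 := hminz _ h2'
      have c1 : ((N ∩ Ay) \ X).card = αy D := by omega
      have c2 : ((N ∩ Az) \ X).card = αz D := by omega
      have ey : N ∩ Ay = My₀ := huy _ ⟨h1', c1⟩
      have ez : N ∩ Az = Mz₀ := huz _ ⟨h2', c2⟩
      rw [heq', ey, ez]
end

section
/- Let (G', X') be a terminal graph, let v ∈ X', set X = X' ∖ {v}, let N ⊆ X, and let G be the graph obtained from G' by adding the edge {v, w} for every w ∈ N, so that (G, X) is a terminal graph. Let S ⊆ V(G') ∖ X' have characteristic (α', β') in (G', X'). Then the characteristic (α, β) of S in (G, X) satisfies, for every D ⊆ X (writing D₊ = D ∪ {v}): α(D) = α'(D₊) + 1 if N ⊄ D, and α(D) = min(α'(D), α'(D₊) + 1) if N ⊆ D; moreover β(D) = β'(D) if N ⊆ D and α'(D) < α'(D₊) + 1, β(D) = β'(D₊) if N ⊄ D or α'(D) > α'(D₊) + 1, and β(D) = 2 if N ⊆ D and α'(D) = α'(D₊) + 1. -/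
open Finset

variable {V : Type*}

/-- Forget operation (vertex kept): removing `v` from the terminals and adding
the edges from `v` to `N ⊆ X = X' \ {v}`, the characteristic of `S` in the new
terminal graph `(G, X)` is computed from its characteristic in `(G', X')`. -/
theorem char_forget_id [Fintype V] [DecidableEq V]
    (G' : SimpleGraph V) (A X' : Finset V) (hG' : IsTerminalGraph G' A X')
    (v : V) (hv : v ∈ X') (N : Finset V) (hN : N ⊆ X'.erase v)
    (S : Finset V) (hS : S ⊆ A \ X')
    (α' β' α β : Finset V → ℕ)
    (h' : IsCharacteristic G' A X' S α' β')
    (h : IsCharacteristic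
          (G' ⊔ SimpleGraph.fromEdgeSet ((fun w => s(v, w)) '' (↑N : Set V)))
          A (X'.erase v) S α β) :
    ∀ D ⊆ X'.erase v,
      (¬ N ⊆ D → α D = α' (insert v D) + 1) ∧
      (N ⊆ D → α D = min (α' D) (α' (insert v D) + 1)) ∧
      (N ⊆ D → α' D < α' (insert v D) + 1 → β D = β' D) ∧
      ((¬ N ⊆ D ∨ α' (insert v D) + 1 < α' D) → β D = β' (insert v D)) ∧
      (N ⊆ D → α' D = α' (insert v D) + 1 → β D = 2) := by
  classical
  set Gs := G' ⊔ SimpleGraph.fromEdgeSet ((fun w => s(v, w)) '' (↑N : Set V)) with hGdef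
  set X := X'.erase v with hXdef
  have hvN : v ∉ N := fun hh => (Finset.mem_erase.1 (hN hh)).1 rfl
  have hvX : v ∉ X := fun hh => (Finset.mem_erase.1 hh).1 rfl
  have hXX' : X ⊆ X' := Finset.erase_subset _ _
  have hnotS : ∀ u ∈ X', u ∉ S := fun u hu hh => (Finset.mem_sdiff.1 (hS hh)).2 hu
  have hvS : v ∉ S := hnotS v hv
  have hinsX : insert v X = X' := Finset.insert_erase hv
  have hadj : ∀ u u', Gs.Adj u u' ↔ G'.Adj u u' ∨ (u = v ∧ u' ∈ N) ∨ (u' = v ∧ u ∈ N) := by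
    intro u u'
    rw [hGdef]
    simp only [SimpleGraph.sup_adj, SimpleGraph.fromEdgeSet_adj, Set.mem_image,
      Finset.mem_coe]
    constructor
    · rintro (hh | ⟨⟨w, hw, hww⟩, hne⟩)
      · exact Or.inl hh
      · rw [Sym2.eq_iff] at hww
        rcases hww with ⟨h1, h2⟩ | ⟨h1, h2⟩
        · exact Or.inr (Or.inl ⟨h1.symm, h2 ▸ hw⟩)
        · exact Or.inr (Or.inr ⟨h1.symm, h2 ▸ hw⟩)
    · rintro (hh | ⟨rfl, hw⟩ | ⟨rfl, hw⟩)
      · exact Or.inl hh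
      · refine Or.inr ⟨⟨u', hw, rfl⟩, ?_⟩
        intro he; subst he; exact hvN hw
      · refine Or.inr ⟨⟨u, hw, Sym2.eq_swap⟩, ?_⟩
        intro he; subst he; exact hvN hw
  have hsdiff_mem : ∀ (M : Finset V), v ∈ M → M \ X = insert v (M \ X') := by
    intro M hvM
    ext u
    simp only [Finset.mem_sdiff, hXdef, Finset.mem_erase, Finset.mem_insert]
    constructor
    · rintro ⟨huM, hu⟩
      by_cases hu' : u = v
      · exact Or.inl hu'
      · exact Or.inr ⟨huM, fun hx => hu ⟨hu', hx⟩⟩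
    · rintro (rfl | ⟨huM, hu⟩)
      · exact ⟨hvM, fun hx => hx.1 rfl⟩
      · exact ⟨huM, fun hx => hu hx.2⟩
  have hcard_mem : ∀ (M : Finset V), v ∈ M → (M \ X).card = (M \ X').card + 1 := by
    intro M hvM
    rw [hsdiff_mem M hvM, Finset.card_insert_of_notMem]
    simp [Finset.mem_sdiff, hv]
  have hsdiff_not : ∀ (M : Finset V), v ∉ M → M \ X = M \ X' := by
    intro M hvM
    ext u
    simp only [Finset.mem_sdiff, hXdef, Finset.mem_erase]
    constructor
    · rintro ⟨huM, hu⟩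
      exact ⟨huM, fun hx => hu ⟨fun he => hvM (he ▸ huM), hx⟩⟩
    · rintro ⟨huM, hu⟩
      exact ⟨huM, fun hx => hu hx.2⟩
  have lemA : ∀ D, D ⊆ X → ∀ M : Finset V,
      (IsTypedVC Gs A X S D M ∧ v ∈ M) ↔ IsTypedVC G' A X' S (insert v D) M := by
    intro D hD M
    constructor
    · rintro ⟨⟨⟨hMA, hcov⟩, hMX⟩, hvM⟩
      refine ⟨⟨hMA, fun u u' ha hu hu' => hcov ((hadj u u').2 (Or.inl ha)) hu hu'⟩, ?_⟩
      rw [← hinsX, Finset.inter_insert_of_mem hvM, hMX]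
    · rintro ⟨⟨hMA, hcov⟩, hMX⟩
      have hvM : v ∈ M := by
        have hm : v ∈ M ∩ X' := hMX ▸ Finset.mem_insert_self v D
        exact (Finset.mem_inter.1 hm).1
      refine ⟨⟨⟨hMA, ?_⟩, ?_⟩, hvM⟩
      · intro u u' ha hu hu'
        rcases (hadj u u').1 ha with hh | ⟨rfl, _⟩ | ⟨rfl, _⟩
        · exact hcov hh hu hu'
        · exact Or.inl hvM
        · exact Or.inr hvM
      · have he : M ∩ X = (M ∩ X').erase v := by
          ext u
          simp only [Finset.mem_inter, hXdef, Finset.mem_erase]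
          tauto
        rw [he, hMX, Finset.erase_insert (fun hvD => hvX (hD hvD))]
  have hvnotM : ∀ D, D ⊆ X → ∀ M : Finset V, IsTypedVC G' A X' S D M → v ∉ M := by
    intro D hD M hM hvM
    have : v ∈ D := hM.2 ▸ Finset.mem_inter.2 ⟨hvM, hv⟩
    exact hvX (hD this)
  have lemB : ∀ D, D ⊆ X → N ⊆ D → ∀ M : Finset V,
      (IsTypedVC Gs A X S D M ∧ v ∉ M) ↔ IsTypedVC G' A X' S D M := by
    intro D hD hND M
    constructor
    · rintro ⟨⟨⟨hMA, hcov⟩, hMX⟩, hvM⟩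
      refine ⟨⟨hMA, fun u u' ha hu hu' => hcov ((hadj u u').2 (Or.inl ha)) hu hu'⟩, ?_⟩
      rw [← hinsX, Finset.inter_insert_of_notMem hvM, hMX]
    · rintro ⟨⟨hMA, hcov⟩, hMX⟩
      have hvM : v ∉ M := hvnotM D hD M ⟨⟨hMA, hcov⟩, hMX⟩
      refine ⟨⟨⟨hMA, ?_⟩, ?_⟩, hvM⟩
      · intro u u' ha hu hu'
        rcases (hadj u u').1 ha with hh | ⟨rfl, hw⟩ | ⟨rfl, hw⟩
        · exact hcov hh hu hu'
        · refine Or.inr ?_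
          have : u' ∈ D := hND hw
          rw [← hMX] at this
          exact (Finset.mem_inter.1 this).1
        · refine Or.inl ?_
          have : u ∈ D := hND hw
          rw [← hMX] at this
          exact (Finset.mem_inter.1 this).1
      · rw [← hinsX, Finset.inter_insert_of_notMem hvM] at hMX
        exact hMX
  have lemC : ∀ D, D ⊆ X → ¬ N ⊆ D → ∀ M : Finset V, IsTypedVC Gs A X S D M → v ∈ M := by
    rintro D hD hND M ⟨⟨hMA, hcov⟩, hMX⟩
    obtain ⟨w, hwN, hwD⟩ := Finset.not_subset.1 hND
    have hwX : w ∈ X := hN hwN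
    have ha : Gs.Adj v w := (hadj v w).2 (Or.inr (Or.inl ⟨rfl, hwN⟩))
    rcases hcov ha hvS (hnotS w (hXX' hwX)) with hh | hh
    · exact hh
    · exact absurd (hMX ▸ Finset.mem_inter.2 ⟨hh, hwX⟩) hwD
  intro D hD
  have hDX' : D ⊆ X' := hD.trans hXX'
  have hD' : insert v D ⊆ X' := Finset.insert_subset hv hDX'
  obtain ⟨⟨M0, hM0, hM0c⟩, hmin, hb12, hb1⟩ := h D hD
  obtain ⟨⟨M1, hM1, hM1c⟩, hmin1, hb12', hb1'⟩ := h' D hDX'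
  obtain ⟨⟨M2, hM2, hM2c⟩, hmin2, hb12'', hb1''⟩ := h' (insert v D) hD'
  -- upper bound from M2 always
  have hA2 := (lemA D hD M2).2 hM2
  have hle2 : α D ≤ α' (insert v D) + 1 := by
    have h1 := hmin M2 hA2.1
    rwa [hcard_mem M2 hA2.2, hM2c] at h1
  -- upper bound from M1 when N ⊆ D
  have hle1 : N ⊆ D → α D ≤ α' D := by
    intro hND
    have hB := (lemB D hD hND M1).2 hM1
    have h1 := hmin M1 hB.1
    rwa [hsdiff_not M1 hB.2, hM1c] at h1
  -- lower bounds from M0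
  have hlow_mem : v ∈ M0 → α' (insert v D) + 1 ≤ α D := by
    intro hvM0
    have h1 := hmin2 M0 ((lemA D hD M0).1 ⟨hM0, hvM0⟩)
    have h2 := hcard_mem M0 hvM0
    omega
  have hlow_not : v ∉ M0 → α' D ≤ α D := by
    intro hvM0
    by_cases hND : N ⊆ D
    · have h1 := hmin1 M0 ((lemB D hD hND M0).1 ⟨hM0, hvM0⟩)
      rwa [← hsdiff_not M0 hvM0, hM0c] at h1
    · exact absurd (lemC D hD hND M0 hM0) hvM0
  have claim1 : ¬ N ⊆ D → α D = α' (insert v D) + 1 := by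
    intro hND
    have hvM0 := lemC D hD hND M0 hM0
    exact le_antisymm hle2 (hlow_mem hvM0)
  have claim2 : N ⊆ D → α D = min (α' D) (α' (insert v D) + 1) := by
    intro hND
    refine le_antisymm (le_min (hle1 hND) hle2) ?_
    by_cases hvM0 : v ∈ M0
    · exact le_trans (min_le_right _ _) (hlow_mem hvM0)
    · exact le_trans (min_le_left _ _) (hlow_not hvM0)
  refine ⟨claim1, claim2, ?_, ?_, ?_⟩
  · -- claim 3
    intro hND hlt
    have hαD : α D = α' D := by rw [claim2 hND]; omega
    have hPQ : ∀ M : Finset V,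
        (IsTypedVC Gs A X S D M ∧ (M \ X).card = α D) ↔
        (IsTypedVC G' A X' S D M ∧ (M \ X').card = α' D) := by
      intro M
      constructor
      · rintro ⟨hM, hMc⟩
        have hvM : v ∉ M := by
          intro hvM
          have h1 := hmin2 M ((lemA D hD M).1 ⟨hM, hvM⟩)
          have h2 := hcard_mem M hvM
          omega
        have hB := (lemB D hD hND M).1 ⟨hM, hvM⟩
        refine ⟨hB, ?_⟩
        rw [← hsdiff_not M hvM, hMc, hαD]
      · rintro ⟨hM, hMc⟩
        have hB := (lemB D hD hND M).2 hM
        refine ⟨hB.1, ?_⟩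
        rw [hsdiff_not M hB.2, hMc, hαD]
    have hiff : β D = 1 ↔ β' D = 1 := by
      rw [hb1, hb1']
      exact existsUnique_congr hPQ
    rcases hb12 with hβ | hβ
    · rw [hβ, (hiff.1 hβ)]
    · rcases hb12' with hβ' | hβ'
      · exfalso; have := hiff.2 hβ'; omega
      · rw [hβ, hβ']
  · -- claim 4
    intro hcase
    have hαD : α D = α' (insert v D) + 1 := by
      rcases hcase with hND | hlt
      · exact claim1 hND
      · by_cases hND : N ⊆ D
        · rw [claim2 hND]; omega
        · exact claim1 hND
    have hPQ : ∀ M : Finset V,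
        (IsTypedVC Gs A X S D M ∧ (M \ X).card = α D) ↔
        (IsTypedVC G' A X' S (insert v D) M ∧ (M \ X').card = α' (insert v D)) := by
      intro M
      constructor
      · rintro ⟨hM, hMc⟩
        have hvM : v ∈ M := by
          by_cases hND : N ⊆ D
          · by_contra hvM
            have h1 := hmin1 M ((lemB D hD hND M).1 ⟨hM, hvM⟩)
            rw [← hsdiff_not M hvM, hMc, hαD] at h1
            rcases hcase with hc | hc
            · exact hc hND
            · omega
          · exact lemC D hD hND M hM
        have hA := (lemA D hD M).1 ⟨hM, hvM⟩
        refine ⟨hA, ?_⟩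
        have h2 := hcard_mem M hvM
        omega
      · rintro ⟨hM, hMc⟩
        have hA := (lemA D hD M).2 hM
        refine ⟨hA.1, ?_⟩
        rw [hcard_mem M hA.2, hMc, hαD]
    have hiff : β D = 1 ↔ β' (insert v D) = 1 := by
      rw [hb1, hb1'']
      exact existsUnique_congr hPQ
    rcases hb12 with hβ | hβ
    · rw [hβ, (hiff.1 hβ)]
    · rcases hb12'' with hβ' | hβ'
      · exfalso; have := hiff.2 hβ'; omega
      · rw [hβ, hβ']
  · -- claim 5
    intro hND heq
    have hαD : α D = α' D := by rw [claim2 hND]; omega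
    rcases hb12 with hβ | hβ
    · exfalso
      obtain ⟨M, _, huniq⟩ := hb1.1 hβ
      have hB1 := (lemB D hD hND M1).2 hM1
      have e1 : M1 = M := huniq M1 ⟨hB1.1, by rw [hsdiff_not M1 hB1.2, hM1c, hαD]⟩
      have e2 : M2 = M := huniq M2 ⟨hA2.1, by rw [hcard_mem M2 hA2.2, hM2c, hαD, heq]⟩
      rw [← e2] at e1
      rw [e1] at hB1
      exact hB1.2 hA2.2
    · exact hβ
end

section
/- Let (G', X') be a terminal graph, let v ∈ X', set X = X' ∖ {v}, let N ⊆ X, and let G be the graph obtained from G' by adding the edge {v, w} for every w ∈ N, so that (G, X) is a terminal graph. Let S ⊆ V(G') ∖ X' have characteristic (α', β') in (G', X'). Then the characteristic (α, β) of S ∪ {v} in (G, X) satisfies, for every D ⊆ X: α(D) = α'(D ∪ {v}) and β(D) = β'(D ∪ {v}). -/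
open Finset

variable {V : Type*}

/-- Forget operation (vertex deleted): removing `v` from the terminals, adding
the edges from `v` to `N ⊆ X = X' \ {v}`, and putting `v` into the deleted set,
the characteristic of `S ∪ {v}` in the new terminal graph `(G, X)`. -/
theorem char_forget_plus [Fintype V] [DecidableEq V]
    (G' : SimpleGraph V) (A X' : Finset V) (hG' : IsTerminalGraph G' A X')
    (v : V) (hv : v ∈ X') (N : Finset V) (hN : N ⊆ X'.erase v)
    (S : Finset V) (hS : S ⊆ A \ X')
    (α' β' α β : Finset V → ℕ)
    (h' : IsCharacteristic G' A X' S α' β')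
    (h : IsCharacteristic
          (G' ⊔ SimpleGraph.fromEdgeSet ((fun w => s(v, w)) '' (↑N : Set V)))
          A (X'.erase v) (insert v S) α β) :
    ∀ D ⊆ X'.erase v, α D = α' (insert v D) ∧ β D = β' (insert v D) := by
  intro D hD
  set Gg := G' ⊔ SimpleGraph.fromEdgeSet ((fun w => s(v, w)) '' (↑N : Set V)) with hGg
  set X := X'.erase v with hX
  have hvS : v ∉ S := fun hvs => (Finset.mem_sdiff.mp (hS hvs)).2 hv
  have hvX : v ∉ X := Finset.notMem_erase v X'
  have hvD : v ∉ D := fun hh => hvX (hD hh)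
  have hDX' : insert v D ⊆ X' := by
    intro x hx
    rcases Finset.mem_insert.mp hx with rfl | hx
    · exact hv
    · exact Finset.erase_subset v X' (hD hx)
  have hadj : ∀ {u w : V}, Gg.Adj u w → G'.Adj u w ∨ u = v ∨ w = v := by
    intro u w hh
    rcases hh with hh | hh
    · exact Or.inl hh
    · right
      obtain ⟨hmem, hne⟩ := hh
      obtain ⟨w', _, hEq⟩ := hmem
      rcases Sym2.eq_iff.mp hEq with ⟨h1, _⟩ | ⟨h2, _⟩
      · exact Or.inl h1.symm
      · exact Or.inr h2.symm
  -- forward: typed VC of (Gg, X, insert v S, D) ↦ insert v M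
  have hfwdcard : ∀ M : Finset V, v ∉ M → insert v M \ X' = M \ X := by
    intro M hvM
    ext x
    simp only [Finset.mem_sdiff, Finset.mem_insert, hX, Finset.mem_erase]
    constructor
    · rintro ⟨rfl | hxM, hxX'⟩
      · exact absurd hv hxX'
      · exact ⟨hxM, fun hc => hxX' hc.2⟩
    · rintro ⟨hxM, hxX⟩
      refine ⟨Or.inr hxM, fun hc => hxX ⟨fun he => hvM (he ▸ hxM), hc⟩⟩
  have hfwd : ∀ M : Finset V, IsTypedVC Gg A X (insert v S) D M →
      IsTypedVC G' A X' S (insert v D) (insert v M) ∧ v ∉ M := by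
    intro M ⟨⟨hMsub, hMcov⟩, hMint⟩
    have hvM : v ∉ M := fun hvm =>
      (Finset.mem_sdiff.mp (hMsub hvm)).2 (Finset.mem_insert_self v S)
    refine ⟨⟨⟨?_, ?_⟩, ?_⟩, hvM⟩
    · intro x hx
      rcases Finset.mem_insert.mp hx with rfl | hx
      · exact Finset.mem_sdiff.mpr ⟨hG'.1 hv, hvS⟩
      · have := Finset.mem_sdiff.mp (hMsub hx)
        exact Finset.mem_sdiff.mpr ⟨this.1, fun hc => this.2 (Finset.mem_insert_of_mem hc)⟩
    · intro u w huw huS hwS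
      by_cases huv : u = v
      · exact Or.inl (huv ▸ Finset.mem_insert_self v M)
      by_cases hwv : w = v
      · exact Or.inr (hwv ▸ Finset.mem_insert_self v M)
      have hu : u ∉ insert v S := by simp [huv, huS]
      have hw : w ∉ insert v S := by simp [hwv, hwS]
      rcases hMcov (Or.inl huw) hu hw with hh | hh
      · exact Or.inl (Finset.mem_insert_of_mem hh)
      · exact Or.inr (Finset.mem_insert_of_mem hh)
    · ext x
      simp only [Finset.mem_inter, Finset.mem_insert]
      constructor
      · rintro ⟨rfl | hxM, hxX'⟩
        · exact Or.inl rfl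
        · refine Or.inr ?_
          have hxv : x ≠ v := fun he => hvM (he ▸ hxM)
          have : x ∈ M ∩ X := Finset.mem_inter.mpr ⟨hxM, by
            rw [hX]; exact Finset.mem_erase.mpr ⟨hxv, hxX'⟩⟩
          rwa [hMint] at this
      · rintro (rfl | hxD)
        · exact ⟨Or.inl rfl, hv⟩
        · have : x ∈ M ∩ X := hMint ▸ hxD
          have := Finset.mem_inter.mp this
          exact ⟨Or.inr this.1, Finset.erase_subset v X' (hX ▸ this.2)⟩
  -- backward: typed VC M' of (G', X', S, insert v D) ↦ M'.erase v
  have hbwdcard : ∀ M' : Finset V, M'.erase v \ X = M' \ X' := by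
    intro M'
    ext x
    simp only [Finset.mem_sdiff, Finset.mem_erase, hX]
    constructor
    · rintro ⟨⟨hxv, hxM⟩, hxX⟩
      exact ⟨hxM, fun hc => hxX ⟨hxv, hc⟩⟩
    · rintro ⟨hxM, hxX'⟩
      exact ⟨⟨fun he => hxX' (he ▸ hv), hxM⟩, fun hc => hxX' hc.2⟩
  have hbwd : ∀ M' : Finset V, IsTypedVC G' A X' S (insert v D) M' →
      IsTypedVC Gg A X (insert v S) D (M'.erase v) ∧ v ∈ M' := by
    intro M' ⟨⟨hMsub, hMcov⟩, hMint⟩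
    have hvM' : v ∈ M' := by
      have : v ∈ M' ∩ X' := hMint ▸ Finset.mem_insert_self v D
      exact (Finset.mem_inter.mp this).1
    refine ⟨⟨⟨?_, ?_⟩, ?_⟩, hvM'⟩
    · intro x hx
      obtain ⟨hxv, hxM⟩ := Finset.mem_erase.mp hx
      have := Finset.mem_sdiff.mp (hMsub hxM)
      refine Finset.mem_sdiff.mpr ⟨this.1, fun hc => ?_⟩
      rcases Finset.mem_insert.mp hc with rfl | hc
      · exact hxv rfl
      · exact this.2 hc
    · intro u w huw huS hwS
      have huv : u ≠ v := fun he => huS (he ▸ Finset.mem_insert_self v S)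
      have hwv : w ≠ v := fun he => hwS (he ▸ Finset.mem_insert_self v S)
      have hG'uw : G'.Adj u w := by
        rcases hadj huw with hh | hh | hh
        · exact hh
        · exact absurd hh huv
        · exact absurd hh hwv
      have hu : u ∉ S := fun hc => huS (Finset.mem_insert_of_mem hc)
      have hw : w ∉ S := fun hc => hwS (Finset.mem_insert_of_mem hc)
      rcases hMcov hG'uw hu hw with hh | hh
      · exact Or.inl (Finset.mem_erase.mpr ⟨huv, hh⟩)
      · exact Or.inr (Finset.mem_erase.mpr ⟨hwv, hh⟩)
    · ext x
      simp only [Finset.mem_inter, Finset.mem_erase]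
      constructor
      · rintro ⟨⟨hxv, hxM⟩, hxX⟩
        have : x ∈ M' ∩ X' := Finset.mem_inter.mpr ⟨hxM, Finset.erase_subset v X' (hX ▸ hxX)⟩
        rw [hMint] at this
        rcases Finset.mem_insert.mp this with rfl | hxD
        · exact absurd rfl hxv
        · exact hxD
      · intro hxD
        have hxX : x ∈ X := hD hxD
        have hxv : x ≠ v := fun he => hvX (he ▸ hxX)
        have : x ∈ M' ∩ X' := hMint ▸ Finset.mem_insert_of_mem hxD
        exact ⟨⟨hxv, (Finset.mem_inter.mp this).1⟩, hxX⟩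
  obtain ⟨⟨M₀, hM₀, hM₀c⟩, hmin, hβ12, hβiff⟩ := h D hD
  obtain ⟨⟨M₀', hM₀', hM₀'c⟩, hmin', hβ'12, hβ'iff⟩ := h' (insert v D) hDX'
  have hα : α D = α' (insert v D) := by
    apply le_antisymm
    · calc α D ≤ (M₀'.erase v \ X).card := hmin _ (hbwd M₀' hM₀').1
      _ = (M₀' \ X').card := by rw [hbwdcard]
      _ = α' (insert v D) := hM₀'c
    · obtain ⟨hfw, hvM₀⟩ := hfwd M₀ hM₀
      calc α' (insert v D) ≤ (insert v M₀ \ X').card := hmin' _ hfw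
      _ = (M₀ \ X).card := by rw [hfwdcard M₀ hvM₀]
      _ = α D := hM₀c
  refine ⟨hα, ?_⟩
  have hiff : (∃! M, IsTypedVC Gg A X (insert v S) D M ∧ (M \ X).card = α D) ↔
      (∃! M', IsTypedVC G' A X' S (insert v D) M' ∧ (M' \ X').card = α' (insert v D)) := by
    constructor
    · rintro ⟨M, ⟨hM, hMc⟩, huniq⟩
      obtain ⟨hfw, hvM⟩ := hfwd M hM
      refine ⟨insert v M, ⟨hfw, by rw [hfwdcard M hvM, hMc, hα]⟩, ?_⟩
      rintro M' ⟨hM', hM'c⟩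
      obtain ⟨hbw, hvM'⟩ := hbwd M' hM'
      have : M'.erase v = M := huniq _ ⟨hbw, by rw [hbwdcard, hM'c, hα]⟩
      rw [← this, Finset.insert_erase hvM']
    · rintro ⟨M', ⟨hM', hM'c⟩, huniq⟩
      obtain ⟨hbw, hvM'⟩ := hbwd M' hM'
      refine ⟨M'.erase v, ⟨hbw, by rw [hbwdcard, hM'c, hα]⟩, ?_⟩
      rintro M ⟨hM, hMc⟩
      obtain ⟨hfw, hvM⟩ := hfwd M hM
      have : insert v M = M' := huniq _ ⟨hfw, by rw [hfwdcard M hvM, hMc, hα]⟩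
      rw [← this, Finset.erase_insert hvM]
  rcases hβ12 with h1 | h2
  · rw [h1]
    have := hβ'iff.mpr (hiff.mp (hβiff.mp h1))
    omega
  · rcases hβ'12 with h1' | h2'
    · have := hβiff.mpr (hiff.mpr (hβ'iff.mp h1'))
      omega
    · rw [h2, h2']
end
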